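/- For 1 ≤ j ≤ n let w_j := Σ_{l=j}^{n} q^{l−j} v_{ε_{−l}+ε_l} ∈ V (the vector representing Ω_j). Then for all i, j ∈ I⁺: e_i w_j = 0 and f_i w_j = 0 whenever i ≠ j; e_j w_j = −v_{ε_{−j}+ε_{j−1}} and f_j w_j = v_{ε_{1−j}+ε_j} for j > 1; and e_1 w_1 = v_{2ε_{−1}}, f_1 w_1 = v_{2ε_1}. -/

import Mathlib

noncomputable section

/-- The `q`-integer `[m]_q = (q^m - q^{-m})/(q - q⁻¹)`. -/
def qnum {𝕜 : Type*} [Field 𝕜] (q : 𝕜) (m : ℤ) : 𝕜 :=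
  (q ^ m - q ^ (-m)) / (q - q⁻¹)

/-- The Gaussian binomial `[m choose 2]_q = [m]_q [m-1]_q / [2]_q`, `[2]_q = q + q⁻¹`. -/
def qbinom2 {𝕜 : Type*} [Field 𝕜] (q : 𝕜) (m : ℤ) : 𝕜 :=
  qnum q m * qnum q (m - 1) / (q + q⁻¹)

/-- The vector space with basis `{v_a}` indexed by exponent vectors. -/
abbrev QV (𝕜 : Type*) [Field 𝕜] := (ℤ → ℕ) →₀ 𝕜

/-- The basis vector `v_a`. -/
def vB {𝕜 : Type*} [Field 𝕜] (a : ℤ → ℕ) : QV 𝕜 := Finsupp.single a 1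

/-- The linear operator on `QV 𝕜` determined by its values on the basis vectors. -/
def mkOp {𝕜 : Type*} [Field 𝕜] (f : (ℤ → ℕ) → QV 𝕜) : Module.End 𝕜 (QV 𝕜) :=
  Finsupp.lift (QV 𝕜) 𝕜 (ℤ → ℕ) f

/-- `s_m(a) = Σ_{l ∈ I, -m < l < m} a_l`. -/
def sE (m : ℤ) (a : ℤ → ℕ) : ℕ :=
  ∑ l ∈ (Finset.Ioo (-m) m).erase 0, a l

/-- The operator `ω_j` (with `ω_j = 0` for `j > n`). -/
def ωop {𝕜 : Type*} [Field 𝕜] (n : ℕ) (q : 𝕜) (j : ℤ) : Module.End 𝕜 (QV 𝕜) :=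
  mkOp fun a => (∏ l ∈ Finset.Icc (-(n : ℤ)) (-j), q ^ (2 * a l)) •
    ∑ m ∈ Finset.Icc j (n : ℤ),
      q ^ (m - j + (sE m a : ℤ)) • vB (a + Pi.single (-m) 1 + Pi.single m 1)

/-- The operator `e_i`. -/
def eop {𝕜 : Type*} [Field 𝕜] (n : ℕ) (q : 𝕜) (i : ℤ) : Module.End 𝕜 (QV 𝕜) :=
  if i = 1 then
    mkOp fun a =>
      qnum (q ^ 2) (a 1) • vB (a + Pi.single (-1 : ℤ) 1 - Pi.single 1 1)
      + ((q - q⁻¹) * qbinom2 q (a 1)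
          * q ^ (2 - 2 * ∑ l ∈ Finset.Icc (-(n : ℤ)) (-2), (a l : ℤ))) •
          ωop n q 2 (vB (a - Pi.single 1 2))
  else
    mkOp fun a =>
      (q ^ ((a (i - 1) : ℤ) - (a i : ℤ)) * qnum q (a (1 - i))) •
          vB (a + Pi.single (-i) 1 - Pi.single (1 - i) 1)
      - qnum q (a i) • vB (a + Pi.single (i - 1) 1 - Pi.single i 1)

/-- The operator `f_i`. -/
def fop {𝕜 : Type*} [Field 𝕜] (n : ℕ) (q : 𝕜) (i : ℤ) : Module.End 𝕜 (QV 𝕜) :=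
  if i = 1 then
    mkOp fun a =>
      qnum (q ^ 2) (a (-1)) • vB (a - Pi.single (-1 : ℤ) 1 + Pi.single 1 1)
      + ((q - q⁻¹) * qbinom2 q (a (-1))
          * q ^ (2 - 2 * ∑ l ∈ Finset.Icc (-(n : ℤ)) (-2), (a l : ℤ))) •
          ωop n q 2 (vB (a - Pi.single (-1 : ℤ) 2))
  else
    mkOp fun a =>
      qnum q (a (-i)) • vB (a - Pi.single (-i) 1 + Pi.single (1 - i) 1)
      - (q ^ ((a (1 - i) : ℤ) - (a (-i) : ℤ)) * qnum q (a (i - 1))) •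
          vB (a - Pi.single (i - 1) 1 + Pi.single i 1)

/-- The operator `k_i^{e}` for `e = ±1`. -/
def kop {𝕜 : Type*} [Field 𝕜] (q : 𝕜) (i : ℤ) (e : ℤ) : Module.End 𝕜 (QV 𝕜) :=
  if i = 1 then
    mkOp fun a => q ^ (e * 2 * ((a (-1 : ℤ) : ℤ) - (a 1 : ℤ))) • vB a
  else
    mkOp fun a =>
      q ^ (e * ((a (-i) : ℤ) - (a (1 - i) : ℤ) + (a (i - 1) : ℤ) - (a i : ℤ))) • vB a

/-- `q_i`: `q₁ = q²`, `q_i = q` for `i ≥ 2`. -/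
def qSub {𝕜 : Type*} [Field 𝕜] (q : 𝕜) (i : ℤ) : 𝕜 := if i = 1 then q ^ 2 else q

/-- The Cartan matrix of type `Cₙ` (with `α₁` the long simple root). -/
def cartan (i j : ℤ) : ℤ :=
  if i = j then 2
  else if i = 1 ∧ j = 2 then -1
  else if i = 2 ∧ j = 1 then -2
  else if i - j = 1 ∨ j - i = 1 then -1
  else 0

/-- `w_j = Σ_{l=j}^{n} q^{l-j} v_{ε_{-l}+ε_l}`, the vector representing `Ω_j`. -/
def wvec {𝕜 : Type*} [Field 𝕜] (n : ℕ) (q : 𝕜) (j : ℤ) : QV 𝕜 :=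
  ∑ l ∈ Finset.Icc j (n : ℤ), q ^ (l - j) • vB (Pi.single (-l) 1 + Pi.single l 1)

section Lemmas
variable {𝕜 : Type*} [Field 𝕜] (n : ℕ) (q : 𝕜)

lemma mkOp_vB (f : (ℤ → ℕ) → QV 𝕜) (a : ℤ → ℕ) : mkOp f (vB a) = f a := by
  simp [mkOp, vB]

lemma qnum_zero : qnum q 0 = 0 := by simp [qnum]

lemma qnum_one (h : q - q⁻¹ ≠ 0) : qnum q 1 = 1 := by
  simp [qnum, zpow_one, zpow_neg_one, div_self h]

lemma qbinom2_zero : qbinom2 q 0 = 0 := by simp [qbinom2, qnum_zero]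

lemma qbinom2_one : qbinom2 q 1 = 0 := by simp [qbinom2, qnum_zero]

/-- basis vector exponent function -/
def ba (l : ℤ) : ℤ → ℕ := Pi.single (-l) 1 + Pi.single l 1

lemma eop_ge2 (i : ℤ) (hi : i ≠ 1) (a : ℤ → ℕ) :
    eop n q i (vB a) =
      (q ^ ((a (i - 1) : ℤ) - (a i : ℤ)) * qnum q (a (1 - i))) •
          vB (a + Pi.single (-i) 1 - Pi.single (1 - i) 1)
      - qnum q (a i) • vB (a + Pi.single (i - 1) 1 - Pi.single i 1) := by
  rw [eop, if_neg hi, mkOp_vB]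

lemma fop_ge2 (i : ℤ) (hi : i ≠ 1) (a : ℤ → ℕ) :
    fop n q i (vB a) =
      qnum q (a (-i)) • vB (a - Pi.single (-i) 1 + Pi.single (1 - i) 1)
      - (q ^ ((a (1 - i) : ℤ) - (a (-i) : ℤ)) * qnum q (a (i - 1))) •
          vB (a - Pi.single (i - 1) 1 + Pi.single i 1) := by
  rw [fop, if_neg hi, mkOp_vB]

lemma E0 (i l : ℤ) (hi : 2 ≤ i) (hl : 1 ≤ l) (h1 : l ≠ i - 1) (h2 : l ≠ i) :
    eop n q i (vB (ba l)) = 0 := by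
  rw [eop_ge2 n q i (by omega)]
  have hA : ba l (1 - i) = 0 := by
    simp [ba, Pi.single_apply, show (1-i) ≠ -l by omega, show (1-i) ≠ l by omega]
  have hB : ba l i = 0 := by
    simp [ba, Pi.single_apply, show i ≠ -l by omega, show i ≠ l by omega]
  rw [hA, hB]
  norm_num [qnum_zero]

lemma F0 (i l : ℤ) (hi : 2 ≤ i) (hl : 1 ≤ l) (h1 : l ≠ i - 1) (h2 : l ≠ i) :
    fop n q i (vB (ba l)) = 0 := by
  rw [fop_ge2 n q i (by omega)]
  have hA : ba l (-i) = 0 := by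
    simp [ba, Pi.single_apply, show (-i) ≠ -l by omega, show (-i) ≠ l by omega]
  have hB : ba l (i - 1) = 0 := by
    simp [ba, Pi.single_apply, show (i-1) ≠ -l by omega, show (i-1) ≠ l by omega]
  rw [hA, hB]
  norm_num [qnum_zero]

end Lemmas

section Lemmas2
variable {𝕜 : Type*} [Field 𝕜] (n : ℕ) (q : 𝕜)

lemma E1 (i : ℤ) (hi : 2 ≤ i) (hq2 : q - q⁻¹ ≠ 0) :
    eop n q i (vB (ba (i - 1))) = q • vB (Pi.single (-i) 1 + Pi.single (i - 1) 1) := by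
  rw [eop_ge2 n q i (by omega)]
  have hA : ba (i-1) (1 - i) = 1 := by
    simp only [ba, Pi.add_apply, Pi.single_apply]; split_ifs <;> first | contradiction | omega
  have hB : ba (i-1) i = 0 := by
    simp only [ba, Pi.add_apply, Pi.single_apply]; split_ifs <;> first | contradiction | omega
  have hC : ba (i-1) (i-1) = 1 := by
    simp only [ba, Pi.add_apply, Pi.single_apply]; split_ifs <;> first | contradiction | omega
  have hV : ba (i-1) + Pi.single (-i) 1 - Pi.single (1 - i) 1
      = Pi.single (-i) 1 + Pi.single (i-1) 1 := by
    funext k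
    simp only [ba, Pi.add_apply, Pi.sub_apply, Pi.single_apply]
    split_ifs <;> first | contradiction | omega
  rw [hA, hB, hC, hV]
  norm_num [qnum_zero, qnum_one q hq2, zpow_one]

lemma E2 (i : ℤ) (hi : 2 ≤ i) (hq2 : q - q⁻¹ ≠ 0) :
    eop n q i (vB (ba i)) = -vB (Pi.single (-i) 1 + Pi.single (i - 1) 1) := by
  rw [eop_ge2 n q i (by omega)]
  have hA : ba i (1 - i) = 0 := by
    simp only [ba, Pi.add_apply, Pi.single_apply]; split_ifs <;> first | contradiction | omega
  have hB : ba i i = 1 := by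
    simp only [ba, Pi.add_apply, Pi.single_apply]; split_ifs <;> first | contradiction | omega
  have hV : ba i + Pi.single (i - 1) 1 - Pi.single i 1
      = Pi.single (-i) 1 + Pi.single (i-1) 1 := by
    funext k
    simp only [ba, Pi.add_apply, Pi.sub_apply, Pi.single_apply]
    split_ifs <;> first | contradiction | omega
  rw [hA, hB, hV]
  norm_num [qnum_zero, qnum_one q hq2]

lemma F1 (i : ℤ) (hi : 2 ≤ i) (hq2 : q - q⁻¹ ≠ 0) :
    fop n q i (vB (ba (i - 1))) = -(q • vB (Pi.single (1 - i) 1 + Pi.single i 1)) := by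
  rw [fop_ge2 n q i (by omega)]
  have hA : ba (i-1) (-i) = 0 := by
    simp only [ba, Pi.add_apply, Pi.single_apply]; split_ifs <;> first | contradiction | omega
  have hB : ba (i-1) (i-1) = 1 := by
    simp only [ba, Pi.add_apply, Pi.single_apply]; split_ifs <;> first | contradiction | omega
  have hC : ba (i-1) (1-i) = 1 := by
    simp only [ba, Pi.add_apply, Pi.single_apply]; split_ifs <;> first | contradiction | omega
  have hV : ba (i-1) - Pi.single (i - 1) 1 + Pi.single i 1
      = Pi.single (1-i) 1 + Pi.single i 1 := by
    funext k
    simp only [ba, Pi.add_apply, Pi.sub_apply, Pi.single_apply]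
    split_ifs <;> first | contradiction | omega
  rw [hA, hB, hC, hV]
  norm_num [qnum_zero, qnum_one q hq2, zpow_one]

lemma F2 (i : ℤ) (hi : 2 ≤ i) (hq2 : q - q⁻¹ ≠ 0) :
    fop n q i (vB (ba i)) = vB (Pi.single (1 - i) 1 + Pi.single i 1) := by
  rw [fop_ge2 n q i (by omega)]
  have hA : ba i (-i) = 1 := by
    simp only [ba, Pi.add_apply, Pi.single_apply]; split_ifs <;> first | contradiction | omega
  have hB : ba i (i-1) = 0 := by
    simp only [ba, Pi.add_apply, Pi.single_apply]; split_ifs <;> first | contradiction | omega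
  have hV : ba i - Pi.single (-i) 1 + Pi.single (1 - i) 1
      = Pi.single (1-i) 1 + Pi.single i 1 := by
    funext k
    simp only [ba, Pi.add_apply, Pi.sub_apply, Pi.single_apply]
    split_ifs <;> first | contradiction | omega
  rw [hA, hB, hV]
  norm_num [qnum_zero, qnum_one q hq2]

end Lemmas2

section Lemmas3
variable {𝕜 : Type*} [Field 𝕜] (n : ℕ) (q : 𝕜)

lemma eop_one (a : ℤ → ℕ) :
    eop n q 1 (vB a) =
      qnum (q ^ 2) (a 1) • vB (a + Pi.single (-1 : ℤ) 1 - Pi.single 1 1)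
      + ((q - q⁻¹) * qbinom2 q (a 1)
          * q ^ (2 - 2 * ∑ l ∈ Finset.Icc (-(n : ℤ)) (-2), (a l : ℤ))) •
          ωop n q 2 (vB (a - Pi.single 1 2)) := by
  rw [eop, if_pos rfl, mkOp_vB]

lemma fop_one (a : ℤ → ℕ) :
    fop n q 1 (vB a) =
      qnum (q ^ 2) (a (-1)) • vB (a - Pi.single (-1 : ℤ) 1 + Pi.single 1 1)
      + ((q - q⁻¹) * qbinom2 q (a (-1))
          * q ^ (2 - 2 * ∑ l ∈ Finset.Icc (-(n : ℤ)) (-2), (a l : ℤ))) •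
          ωop n q 2 (vB (a - Pi.single (-1 : ℤ) 2)) := by
  rw [fop, if_pos rfl, mkOp_vB]

lemma Eone0 (l : ℤ) (hl : 2 ≤ l) : eop n q 1 (vB (ba l)) = 0 := by
  rw [eop_one]
  have hA : ba l 1 = 0 := by
    simp only [ba, Pi.add_apply, Pi.single_apply]; split_ifs <;> first | contradiction | omega
  rw [hA]
  norm_num [qnum_zero, qbinom2_zero]

lemma Fone0 (l : ℤ) (hl : 2 ≤ l) : fop n q 1 (vB (ba l)) = 0 := by
  rw [fop_one]
  have hA : ba l (-1) = 0 := by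
    simp only [ba, Pi.add_apply, Pi.single_apply]; split_ifs <;> first | contradiction | omega
  rw [hA]
  norm_num [qnum_zero, qbinom2_zero]

lemma Eone1 (hq4 : q ^ 2 - (q ^ 2)⁻¹ ≠ 0) :
    eop n q 1 (vB (ba 1)) = vB (Pi.single (-1 : ℤ) 2) := by
  rw [eop_one]
  have hA : ba 1 1 = 1 := by
    simp only [ba, Pi.add_apply, Pi.single_apply]; split_ifs <;> first | contradiction | omega
  have hV : ba 1 + Pi.single (-1 : ℤ) 1 - Pi.single 1 1 = Pi.single (-1 : ℤ) 2 := by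
    funext k
    simp only [ba, Pi.add_apply, Pi.sub_apply, Pi.single_apply]
    split_ifs <;> first | contradiction | omega
  rw [hA, hV]
  norm_num [qbinom2_one, qnum_one _ hq4]

lemma Fone1 (hq4 : q ^ 2 - (q ^ 2)⁻¹ ≠ 0) :
    fop n q 1 (vB (ba 1)) = vB (Pi.single (1 : ℤ) 2) := by
  rw [fop_one]
  have hA : ba 1 (-1) = 1 := by
    simp only [ba, Pi.add_apply, Pi.single_apply]; split_ifs <;> first | contradiction | omega
  have hV : ba 1 - Pi.single (-1 : ℤ) 1 + Pi.single 1 1 = Pi.single (1 : ℤ) 2 := by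
    funext k
    simp only [ba, Pi.add_apply, Pi.sub_apply, Pi.single_apply]
    split_ifs <;> first | contradiction | omega
  rw [hA, hV]
  norm_num [qbinom2_one, qnum_one _ hq4]

end Lemmas3

section Main
variable {𝕜 : Type*} [Field 𝕜] (n : ℕ) (q : 𝕜)

lemma wvec_eq (j : ℤ) :
    wvec n q j = ∑ l ∈ Finset.Icc j (n : ℤ), q ^ (l - j) • vB (ba l) := rfl

lemma zpow_merge (hq : q ≠ 0) (i j : ℤ) : q ^ (i - 1 - j) * q = q ^ (i - j) := by
  rw [show i - j = (i-1-j) + 1 by ring, zpow_add₀ hq, zpow_one]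

end Main

theorem aux_stmt12 {𝕜 : Type*} [Field 𝕜] [CharZero 𝕜] (n : ℕ) (hn : 2 ≤ n)
    (q : 𝕜) (hq : q ≠ 0) (hroot : ∀ r : ℕ, r ≠ 0 → q ^ r ≠ 1) :
    (∀ i j : ℤ, 1 ≤ i → i ≤ n → 1 ≤ j → j ≤ n → i ≠ j →
      eop n q i (wvec n q j) = 0 ∧ fop n q i (wvec n q j) = 0) ∧
    (∀ j : ℤ, 1 < j → j ≤ n →
      eop n q j (wvec n q j) = -vB (Pi.single (-j) 1 + Pi.single (j - 1) 1) ∧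
      fop n q j (wvec n q j) = vB (Pi.single (1 - j) 1 + Pi.single j 1)) ∧
    eop n q 1 (wvec n q 1) = vB (Pi.single (-1 : ℤ) 2) ∧
    fop n q 1 (wvec n q 1) = vB (Pi.single (1 : ℤ) 2) := by
  have hq2 : q - q⁻¹ ≠ 0 := by
    intro h
    apply hroot 2 (by norm_num)
    have : q = q⁻¹ := sub_eq_zero.mp h
    calc q ^ 2 = q * q := sq q
    _ = q * q⁻¹ := by rw [← this]
    _ = 1 := mul_inv_cancel₀ hq
  have hq4 : q ^ 2 - (q ^ 2)⁻¹ ≠ 0 := by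
    intro h
    apply hroot 4 (by norm_num)
    have h2 : (q ^ 2) ≠ 0 := pow_ne_zero 2 hq
    have : q ^ 2 = (q ^ 2)⁻¹ := sub_eq_zero.mp h
    calc q ^ 4 = q ^ 2 * q ^ 2 := by ring
    _ = q ^ 2 * (q ^ 2)⁻¹ := by rw [← this]
    _ = 1 := mul_inv_cancel₀ h2
  have hnn : (2 : ℤ) ≤ (n : ℤ) := by exact_mod_cast hn
  refine ⟨?_, ?_, ?_, ?_⟩
  · intro i j h1i hin h1j hjn hij
    rcases eq_or_lt_of_le h1i with hi1 | hi2
    · -- i = 1, so j ≥ 2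
      have hj2 : 2 ≤ j := by omega
      constructor <;>
      · rw [wvec_eq, map_sum]
        apply Finset.sum_eq_zero
        intro l hl
        rw [Finset.mem_Icc] at hl
        rw [map_smul]
        first
        | rw [← hi1, Eone0 n q l (by omega), smul_zero]
        | rw [← hi1, Fone0 n q l (by omega), smul_zero]
    · -- 2 ≤ i
      have hi2' : 2 ≤ i := hi2
      rcases lt_or_gt_of_ne hij with hlt | hgt
      · -- i < j : all terms vanish
        constructor <;>
        · rw [wvec_eq, map_sum]
          apply Finset.sum_eq_zero
          intro l hl
          rw [Finset.mem_Icc] at hl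
          rw [map_smul]
          first
          | rw [E0 n q i l hi2' (by omega) (by omega) (by omega), smul_zero]
          | rw [F0 n q i l hi2' (by omega) (by omega) (by omega), smul_zero]
      · -- j < i : the two terms l = i-1, l = i cancel
        have hsub : ({i - 1, i} : Finset ℤ) ⊆ Finset.Icc j (n : ℤ) := by
          intro x hx
          simp only [Finset.mem_insert, Finset.mem_singleton] at hx
          rw [Finset.mem_Icc]
          omega
        constructor
        · rw [wvec_eq, map_sum]
          simp only [map_smul]
          rw [← Finset.sum_subset hsub (by
            intro x hxt hxs
            simp only [Finset.mem_insert, Finset.mem_singleton, not_or] at hxs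
            rw [Finset.mem_Icc] at hxt
            rw [E0 n q i x hi2' (by omega) hxs.1 hxs.2, smul_zero])]
          rw [Finset.sum_pair (show i - 1 ≠ i by omega)]
          rw [E1 n q i hi2' hq2, E2 n q i hi2' hq2, smul_smul, zpow_merge q hq i j,
            smul_neg, add_neg_cancel]
        · rw [wvec_eq, map_sum]
          simp only [map_smul]
          rw [← Finset.sum_subset hsub (by
            intro x hxt hxs
            simp only [Finset.mem_insert, Finset.mem_singleton, not_or] at hxs
            rw [Finset.mem_Icc] at hxt
            rw [F0 n q i x hi2' (by omega) hxs.1 hxs.2, smul_zero])]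
          rw [Finset.sum_pair (show i - 1 ≠ i by omega)]
          rw [F1 n q i hi2' hq2, F2 n q i hi2' hq2, smul_neg, smul_smul,
            zpow_merge q hq i j, neg_add_cancel]
  · intro j hj1 hjn
    have hj2 : 2 ≤ j := by omega
    constructor
    · rw [wvec_eq, map_sum]
      rw [Finset.sum_eq_single_of_mem j (by rw [Finset.mem_Icc]; omega) (by
        intro l hl hne
        rw [Finset.mem_Icc] at hl
        rw [map_smul, E0 n q j l hj2 (by omega) (by omega) hne, smul_zero])]
      rw [map_smul, E2 n q j hj2 hq2, sub_self, zpow_zero, one_smul]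
    · rw [wvec_eq, map_sum]
      rw [Finset.sum_eq_single_of_mem j (by rw [Finset.mem_Icc]; omega) (by
        intro l hl hne
        rw [Finset.mem_Icc] at hl
        rw [map_smul, F0 n q j l hj2 (by omega) (by omega) hne, smul_zero])]
      rw [map_smul, F2 n q j hj2 hq2, sub_self, zpow_zero, one_smul]
  · rw [wvec_eq, map_sum]
    rw [Finset.sum_eq_single_of_mem 1 (by rw [Finset.mem_Icc]; omega) (by
      intro l hl hne
      rw [Finset.mem_Icc] at hl
      rw [map_smul, Eone0 n q l (by omega), smul_zero])]
    rw [map_smul, Eone1 n q hq4, sub_self, zpow_zero, one_smul]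
  · rw [wvec_eq, map_sum]
    rw [Finset.sum_eq_single_of_mem 1 (by rw [Finset.mem_Icc]; omega) (by
      intro l hl hne
      rw [Finset.mem_Icc] at hl
      rw [map_smul, Fone0 n q l (by omega), smul_zero])]
    rw [map_smul, Fone1 n q hq4, sub_self, zpow_zero, one_smul]


/-- Action of the `e_i`, `f_i` on the vectors `w_j`:
`e_i w_j = f_i w_j = 0` for `i ≠ j`; `e_j w_j = -v_{ε_{-j}+ε_{j-1}}` and
`f_j w_j = v_{ε_{1-j}+ε_j}` for `j > 1`; `e_1 w_1 = v_{2ε_{-1}}`, `f_1 w_1 = v_{2ε_1}`. -/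
theorem stmt12 {𝕜 : Type*} [Field 𝕜] [CharZero 𝕜] (n : ℕ) (hn : 2 ≤ n)
    (q : 𝕜) (hq : q ≠ 0) (hroot : ∀ r : ℕ, r ≠ 0 → q ^ r ≠ 1) :
    (∀ i j : ℤ, 1 ≤ i → i ≤ n → 1 ≤ j → j ≤ n → i ≠ j →
      eop n q i (wvec n q j) = 0 ∧ fop n q i (wvec n q j) = 0) ∧
    (∀ j : ℤ, 1 < j → j ≤ n →
      eop n q j (wvec n q j) = -vB (Pi.single (-j) 1 + Pi.single (j - 1) 1) ∧
      fop n q j (wvec n q j) = vB (Pi.single (1 - j) 1 + Pi.single j 1)) ∧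
    eop n q 1 (wvec n q 1) = vB (Pi.single (-1 : ℤ) 2) ∧
    fop n q 1 (wvec n q 1) = vB (Pi.single (1 : ℤ) 2) := by
  exact aux_stmt12 n hn q hq hroot
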